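/- In the two-seller sequential-search demand system, the two sellers' bonuses coincide: B_i = B_j (the gain in demand from being searched first instead of second is the same for both sellers, for every price pair). -/

import Mathlib

open MeasureTheory

/-- The CDF associated to density `f` supported on `[0,1]`. -/
noncomputable def cdf (f : ℝ → ℝ) (x : ℝ) : ℝ := ∫ u in (0:ℝ)..x, f u

/-- In the two-seller sequential-search demand system, the two sellers' bonuses
coincide: `B_i = B_j` for every admissible price pair. -/
theorem bonus_symmetric
    (f : ℝ → ℝ) (hf_cont : Continuous f) (hf_nonneg : ∀ x, 0 ≤ f x)
    (hf_supp : ∀ x, x < 0 ∨ 1 < x → f x = 0)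
    (hf_total : (∫ u in (0:ℝ)..1, f u) = 1)
    (A pi pj : ℝ) (hpi : 0 ≤ pi) (hpj : 0 ≤ pj)
    (hpiA : pi ≤ A) (hpjA : pj ≤ A) (hA1 : A ≤ 1)
    (hgap : |pi - pj| ≤ 1 - A) :
    -- B_i = D_i¹ - D_i²  equals  B_j = D_j¹ - D_j²
    ((1 - cdf f (A + (pi - pj)) + ∫ u in pj..A, cdf f u * f (u + (pi - pj)))
        - ((1 - cdf f A) * cdf f (A - (pi - pj))
            + ∫ u in pj..(A - (pi - pj)), cdf f u * f (u + (pi - pj))))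
      =
    ((1 - cdf f (A - (pi - pj)) + ∫ u in pi..A, cdf f u * f (u - (pi - pj)))
        - ((1 - cdf f A) * cdf f (A + (pi - pj))
            + ∫ u in pj..A, cdf f (u + (pi - pj)) * f u)) := by
  set d := pi - pj with hd
  have hFderiv : ∀ x : ℝ, HasDerivAt (cdf f) (f x) x := by
    intro x
    exact intervalIntegral.integral_hasDerivAt_right
      (hf_cont.intervalIntegrable _ _)
      (hf_cont.stronglyMeasurableAtFilter _ _) hf_cont.continuousAt
  have hFcont : Continuous (cdf f) := by
    apply continuous_iff_continuousAt.mpr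
    intro x; exact (hFderiv x).continuousAt
  have hG : ∀ x : ℝ, HasDerivAt (fun u => cdf f u * cdf f (u + d))
      (f x * cdf f (x + d) + cdf f x * f (x + d)) x := by
    intro x
    have h2 : HasDerivAt (fun u : ℝ => cdf f (u + d)) (f (x + d)) x := by
      have h := (hFderiv (x + d)).comp x ((hasDerivAt_id x).add_const d)
      rw [mul_one] at h
      exact h
    exact (hFderiv x).mul h2
  have hcont1 : Continuous (fun u => cdf f u * f (u + d)) :=
    hFcont.mul (hf_cont.comp (continuous_id.add continuous_const))
  have hcont2 : Continuous (fun u => cdf f (u + d) * f u) :=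
    (hFcont.comp (continuous_id.add continuous_const)).mul hf_cont
  have hcontA : Continuous (fun u : ℝ => f u * cdf f (u + d)) :=
    hf_cont.mul (hFcont.comp (continuous_id.add continuous_const))
  have hcont3 : Continuous (fun u => f u * cdf f (u + d) + cdf f u * f (u + d)) :=
    hcontA.add hcont1
  have hFTC : (∫ u in (A - d)..A, (f u * cdf f (u + d) + cdf f u * f (u + d)))
      = cdf f A * cdf f (A + d) - cdf f (A - d) * cdf f (A - d + d) :=
    intervalIntegral.integral_eq_sub_of_hasDerivAt (fun x _ => hG x)
      (hcont3.intervalIntegrable _ _)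
  have hFTCsplit : (∫ u in (A - d)..A, (f u * cdf f (u + d) + cdf f u * f (u + d)))
      = (∫ u in (A - d)..A, f u * cdf f (u + d))
        + (∫ u in (A - d)..A, cdf f u * f (u + d)) := by
    exact intervalIntegral.integral_add (hcontA.intervalIntegrable _ _)
      (hcont1.intervalIntegrable _ _)
  have hcomm : (∫ u in (A - d)..A, f u * cdf f (u + d))
      = ∫ u in (A - d)..A, cdf f (u + d) * f u := by
    simp [mul_comm]
  have hsplit1 : (∫ u in pj..(A - d), cdf f u * f (u + d))
      + (∫ u in (A - d)..A, cdf f u * f (u + d))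
      = ∫ u in pj..A, cdf f u * f (u + d) :=
    intervalIntegral.integral_add_adjacent_intervals
      (hcont1.intervalIntegrable _ _) (hcont1.intervalIntegrable _ _)
  have hsplit2 : (∫ u in pj..(A - d), cdf f (u + d) * f u)
      + (∫ u in (A - d)..A, cdf f (u + d) * f u)
      = ∫ u in pj..A, cdf f (u + d) * f u :=
    intervalIntegral.integral_add_adjacent_intervals
      (hcont2.intervalIntegrable _ _) (hcont2.intervalIntegrable _ _)
  have hsub : (∫ u in pi..A, cdf f u * f (u - d))
      = ∫ u in pj..(A - d), cdf f (u + d) * f u := by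
    have h := intervalIntegral.integral_comp_add_right
      (a := pj) (b := A - d) (fun u => cdf f u * f (u - d)) d
    have e1 : pj + d = pi := by rw [hd]; ring
    have e2 : A - d + d = A := by ring
    rw [e1, e2] at h
    rw [← h]
    congr 1
    ext u
    simp
  have eA : A - d + d = A := by ring
  rw [eA] at hFTC
  rw [hFTCsplit, hcomm] at hFTC
  rw [hsub]
  linarith [hFTC, hsplit1, hsplit2]
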